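/- arXiv:2207.13940 — 2 statements merged into one kernel-verified Lean document; each statement's English description precedes it below -/
import Mathlib

section
/- Let n, p be integers with n ≥ 1 and p ≥ 1, and let σ be a permutation of {1,…,n} satisfying the Balas–Simonetti condition with parameter p (i + p ≤ j implies σ(i) < σ(j)). Suppose S ⊆ {1,…,n} is nonempty and the image σ(S) is a set of consecutive integers (an interval of positions). Let m = min S and M = max S. Then every integer l with m + p ≤ l ≤ M − p belongs to S. -/
/-- If σ is a Balas–Simonetti permutation with parameter p and S is a nonempty
set of indices whose image under σ is an interval of positions, then every
index l with `min S + p ≤ l ≤ max S - p` belongs to S. -/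
theorem stmt_2 (n p : ℕ) (hn : 1 ≤ n) (hp : 1 ≤ p) (σ : Equiv.Perm (Fin n))
    (hBS : ∀ i j : Fin n, (i : ℕ) + p ≤ (j : ℕ) → (σ i : ℕ) < (σ j : ℕ))
    (S : Finset (Fin n)) (hS : S.Nonempty)
    (hIcc : ∃ a b : Fin n, S.image σ = Finset.Icc a b) :
    ∀ l : Fin n, (S.min' hS : ℕ) + p ≤ (l : ℕ) → (l : ℕ) + p ≤ (S.max' hS : ℕ) →
      l ∈ S := by
  intro l h1 h2
  obtain ⟨a, b, hab⟩ := hIcc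
  have hmin : σ (S.min' hS) ∈ Finset.Icc a b := by
    rw [← hab]; exact Finset.mem_image_of_mem σ (S.min'_mem hS)
  have hmax : σ (S.max' hS) ∈ Finset.Icc a b := by
    rw [← hab]; exact Finset.mem_image_of_mem σ (S.max'_mem hS)
  have hml : (σ (S.min' hS) : ℕ) < σ l := hBS _ _ h1
  have hlM : (σ l : ℕ) < σ (S.max' hS) := hBS _ _ h2
  have hmem : σ l ∈ Finset.Icc a b := by
    rw [Finset.mem_Icc] at *
    constructor
    · exact le_trans hmin.1 (le_of_lt (Fin.lt_def.mpr hml))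
    · exact le_trans (le_of_lt (Fin.lt_def.mpr hlM)) hmax.2
  rw [← hab, Finset.mem_image] at hmem
  obtain ⟨x, hx, hxl⟩ := hmem
  rwa [← σ.injective hxl]
end

section
/- For every integer p ≥ 1, 1 + Σ_{i=1}^{⌊p/2⌋} Σ_{m=i}^{p−i} C(m−1, i−1) · C(p−m, i) = 2^{p−1}. -/
open Finset

lemma sum_range_choose_left (n a : ℕ) :
    ∑ j ∈ range (n + 1), Nat.choose j a = Nat.choose (n + 1) (a + 1) := by
  rw [← Nat.sum_Icc_choose n a]
  symm
  apply sum_subset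
  · intro x hx
    simp only [mem_Icc] at hx
    simp only [mem_range]; omega
  · intro x hx hnx
    simp only [mem_range] at hx
    simp only [mem_Icc] at hnx
    exact Nat.choose_eq_zero_of_lt (by omega)

lemma conv_choose (n : ℕ) : ∀ a b : ℕ,
    ∑ j ∈ range (n + 1), Nat.choose j a * Nat.choose (n - j) b
      = Nat.choose (n + 1) (a + b + 1) := by
  induction n with
  | zero =>
    intro a b
    rw [show (0:ℕ) + 1 = 1 from rfl, range_one, sum_singleton, Nat.sub_self]
    rcases Nat.eq_zero_or_pos a with ha | ha
    · rcases Nat.eq_zero_or_pos b with hb | hb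
      · simp [ha, hb]
      · subst ha
        rw [Nat.choose_eq_zero_of_lt hb, mul_zero,
          Nat.choose_eq_zero_of_lt (show (1:ℕ) < 0 + b + 1 by omega)]
    · rw [Nat.choose_eq_zero_of_lt ha, zero_mul,
        Nat.choose_eq_zero_of_lt (show (1:ℕ) < a + b + 1 by omega)]
  | succ n ih =>
    intro a b
    cases b with
    | zero =>
      simp only [Nat.choose_zero_right, mul_one, Nat.add_zero]
      exact sum_range_choose_left (n + 1) a
    | succ b =>
      rw [sum_range_succ, Nat.sub_self, Nat.choose_eq_zero_of_lt (Nat.succ_pos b),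
        mul_zero, add_zero]
      have key : ∀ j ∈ range (n + 1),
          Nat.choose j a * Nat.choose (n + 1 - j) (b + 1)
            = Nat.choose j a * Nat.choose (n - j) b
              + Nat.choose j a * Nat.choose (n - j) (b + 1) := by
        intro j hj
        simp only [mem_range] at hj
        rw [show n + 1 - j = (n - j) + 1 by omega, Nat.choose_succ_succ, mul_add]
      rw [sum_congr rfl key, sum_add_distrib, ih a b, ih a (b + 1),
        show a + (b + 1) + 1 = (a + b + 1) + 1 by ring,
        Nat.choose_succ_succ (n + 1) (a + b + 1)]

lemma sum_even_choose (p : ℕ) (hp : 1 ≤ p) :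
    ∑ i ∈ range (p / 2 + 1), Nat.choose p (2 * i) = 2 ^ (p - 1) := by
  have himg : (range (p + 1)).filter (fun k => Even k)
      = (range (p / 2 + 1)).image (fun i => 2 * i) := by
    ext k
    simp only [mem_filter, mem_range, mem_image, Nat.even_iff]
    constructor
    · rintro ⟨h1, h2⟩; exact ⟨k / 2, by omega, by omega⟩
    · rintro ⟨i, hi, rfl⟩; omega
  have hS : ∑ k ∈ (range (p + 1)).filter (fun k => Even k), Nat.choose p k
      = ∑ i ∈ range (p / 2 + 1), Nat.choose p (2 * i) := by
    rw [himg, sum_image]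
    intro x _ y _ h; simp only at h; omega
  have h1 : ∑ k ∈ range (p + 1), ((1 + (-1) ^ k) * (Nat.choose p k : ℤ)) = 2 ^ p := by
    simp only [add_mul, one_mul]
    rw [sum_add_distrib, Int.alternating_sum_range_choose_of_ne (by omega), add_zero,
      ← Nat.cast_sum, Nat.sum_range_choose]
    push_cast; ring
  have hsplit := Finset.sum_filter_add_sum_filter_not (range (p + 1))
    (fun k => Even k) (fun k => ((1 + (-1) ^ k) * (Nat.choose p k : ℤ)))
  have hA : ∑ x ∈ (range (p + 1)).filter (fun x => Even x),
      ((1 + (-1) ^ x) * (Nat.choose p x : ℤ))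
      = 2 * ∑ x ∈ (range (p + 1)).filter (fun x => Even x), (Nat.choose p x : ℤ) := by
    rw [mul_sum]
    apply sum_congr rfl
    intro x hx
    rw [(mem_filter.mp hx).2.neg_one_pow]
    ring
  have hB : ∑ x ∈ (range (p + 1)).filter (fun x => ¬Even x),
      ((1 + (-1) ^ x) * (Nat.choose p x : ℤ)) = 0 := by
    apply sum_eq_zero
    intro x hx
    rw [(Nat.not_even_iff_odd.mp (mem_filter.mp hx).2).neg_one_pow]
    ring
  have h2 : 2 * ∑ x ∈ (range (p + 1)).filter (fun x => Even x), (Nat.choose p x : ℤ)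
      = 2 ^ p := by
    rw [← hA]; linarith [hsplit, h1, hB]
  have h3 : 2 * ∑ x ∈ (range (p + 1)).filter (fun x => Even x), Nat.choose p x = 2 ^ p := by
    exact_mod_cast (by push_cast; exact h2 :
      ((2 * ∑ x ∈ (range (p + 1)).filter (fun x => Even x), Nat.choose p x : ℕ) : ℤ) = 2 ^ p)
  rw [hS] at h3
  have h5 : 2 * 2 ^ (p - 1) = 2 ^ p := by
    rw [← pow_succ']
    congr 1
    omega
  exact Nat.eq_of_mul_eq_mul_left (by norm_num) (h3.trans h5.symm)

/-- 1 + Σ_{i=1}^{⌊p/2⌋} Σ_{m=i}^{p−i} C(m−1, i−1)·C(p−m, i) = 2^{p−1}. -/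
theorem stmt_11 (p : ℕ) (hp : 1 ≤ p) :
    1 + ∑ i ∈ Finset.Icc 1 (p / 2), ∑ m ∈ Finset.Icc i (p - i),
        Nat.choose (m - 1) (i - 1) * Nat.choose (p - m) i
      = 2 ^ (p - 1) := by
  have hinner : ∀ i ∈ Finset.Icc 1 (p / 2),
      ∑ m ∈ Finset.Icc i (p - i), Nat.choose (m - 1) (i - 1) * Nat.choose (p - m) i
        = Nat.choose p (2 * i) := by
    intro i hi
    simp only [mem_Icc] at hi
    obtain ⟨hi1, hi2⟩ := hi
    have himg : Finset.Icc i (p - i)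
        = (Finset.Icc (i - 1) (p - i - 1)).image (fun j => j + 1) := by
      ext m
      simp only [mem_Icc, mem_image]
      constructor
      · rintro ⟨h1, h2⟩; exact ⟨m - 1, ⟨by omega, by omega⟩, by omega⟩
      · rintro ⟨j, ⟨hj1, hj2⟩, rfl⟩; omega
    rw [himg, sum_image (by intro x _ y _ h; simp only at h; omega)]
    have hstep : ∑ j ∈ Finset.Icc (i - 1) (p - i - 1),
        Nat.choose (j + 1 - 1) (i - 1) * Nat.choose (p - (j + 1)) i
        = ∑ j ∈ Finset.Icc (i - 1) (p - i - 1),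
          Nat.choose j (i - 1) * Nat.choose (p - 1 - j) i := by
      apply sum_congr rfl
      intro j hj
      simp only [mem_Icc] at hj
      rw [Nat.add_sub_cancel, show p - (j + 1) = p - 1 - j by omega]
    rw [hstep]
    have hext : ∑ j ∈ Finset.Icc (i - 1) (p - i - 1),
        Nat.choose j (i - 1) * Nat.choose (p - 1 - j) i
        = ∑ j ∈ range ((p - 1) + 1), Nat.choose j (i - 1) * Nat.choose (p - 1 - j) i := by
      apply sum_subset
      · intro x hx
        simp only [mem_Icc] at hx
        simp only [mem_range]; omega
      · intro x hx hnx
        simp only [mem_range] at hx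
        simp only [mem_Icc] at hnx
        rcases lt_or_ge x (i - 1) with h | h
        · rw [Nat.choose_eq_zero_of_lt h, zero_mul]
        · rw [Nat.choose_eq_zero_of_lt (show p - 1 - x < i by omega), mul_zero]
    rw [hext, conv_choose (p - 1) (i - 1) i,
      show (p - 1) + 1 = p by omega, show i - 1 + i + 1 = 2 * i by omega]
  rw [sum_congr rfl hinner, ← sum_even_choose p hp,
    show range (p / 2 + 1) = insert 0 (Finset.Icc 1 (p / 2)) by
      ext k; simp only [mem_range, mem_insert, mem_Icc]; omega,
    sum_insert (by simp)]
  simp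
end
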